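/- For all natural numbers n, the double sum over integers k, ℓ of binom(2n, n+k) * binom(2n, n+ℓ) * |k^2 - ℓ^2| equals 2 * n^2 * binom(2n, n)^2. -/

import Mathlib

/-- Binomial coefficient `n.choose k` extended to an integer lower index,
vanishing when `k < 0` (and, as usual, when `k > n`). -/
def ichoose (n : ℕ) (k : ℤ) : ℤ := if 0 ≤ k then (n.choose k.toNat : ℤ) else 0

open Finset

namespace Stmt3Aux


lemma factq (a : ℕ) : ((a.factorial : ℚ)) ≠ 0 := by
  exact_mod_cast a.factorial_ne_zero

/-- multinomial normal form in ℚ -/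
lemma key (N a b c d : ℕ) (h : a + b + c + d = N) :
    ((N.choose (a+b) * (a+b).choose a * (N - (a+b)).choose c : ℕ) : ℚ)
      = (N.factorial : ℚ) / (a.factorial * b.factorial * c.factorial * d.factorial) := by
  have h1 : N - (a+b) = c + d := by omega
  rw [h1]
  push_cast
  rw [Nat.cast_choose ℚ (by omega : a + b ≤ N), Nat.cast_choose ℚ (by omega : a ≤ a + b),
    Nat.cast_choose ℚ (by omega : c ≤ c + d)]
  have h2 : N - (a+b) = c + d := h1
  rw [h2, Nat.add_sub_cancel_left, Nat.add_sub_cancel_left]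
  field_simp

lemma multi_move (N s p q r : ℕ) (h : s + p + q + r = N) :
    N.choose (s+p) * (s+p).choose s * (N - (s+p)).choose q
      = N.choose (s+r) * (s+r).choose s * (N - (s+r)).choose p := by
  have h1 := key N s p q r h
  have h2 := key N s r p q (by omega)
  have : ((N.choose (s+p) * (s+p).choose s * (N - (s+p)).choose q : ℕ) : ℚ)
      = ((N.choose (s+r) * (s+r).choose s * (N - (s+r)).choose p : ℕ) : ℚ) := by
    rw [h1, h2]; ring
  exact_mod_cast this

lemma M1 (r c : ℕ) :
    (2*(r+c)).choose (2*r) * ((2*r).choose r * (2*c).choose c)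
      = (2*(r+c)).choose (r+c) * ((r+c).choose r)^2 := by
  have : (((2*(r+c)).choose (2*r) * ((2*r).choose r * (2*c).choose c) : ℕ) : ℚ)
      = (((2*(r+c)).choose (r+c) * ((r+c).choose r)^2 : ℕ) : ℚ) := by
    push_cast
    rw [Nat.cast_choose ℚ (by omega : 2*r ≤ 2*(r+c)), Nat.cast_choose ℚ (by omega : r ≤ 2*r),
      Nat.cast_choose ℚ (by omega : c ≤ 2*c), Nat.cast_choose ℚ (by omega : r + c ≤ 2*(r+c)),
      Nat.cast_choose ℚ (by omega : r ≤ r + c)]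
    rw [show 2*(r+c) - 2*r = 2*c by omega, show 2*r - r = r by omega,
      show 2*c - c = c by omega, show 2*(r+c) - (r+c) = r + c by omega,
      show r + c - r = c by omega]
    have h1 : ((r+c).factorial : ℚ) ≠ 0 := factq _
    have h2 : ((2*r).factorial : ℚ) ≠ 0 := factq _
    have h3 : ((2*c).factorial : ℚ) ≠ 0 := factq _
    have h4 : (r.factorial : ℚ) ≠ 0 := factq _
    have h5 : (c.factorial : ℚ) ≠ 0 := factq _
    field_simp
  exact_mod_cast this

lemma M2 (r c : ℕ) :
    (2*r+1) * (2*c+1) * ((2*(r+c)+2).choose (2*r+1) * ((2*r).choose r * (2*c).choose c))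
      = (c+1)^2 * ((2*(r+c)+2).choose (r+c+1) * ((r+c+1).choose r)^2) := by
  have : (((2*r+1) * (2*c+1) * ((2*(r+c)+2).choose (2*r+1) * ((2*r).choose r * (2*c).choose c)) : ℕ) : ℚ)
      = (((c+1)^2 * ((2*(r+c)+2).choose (r+c+1) * ((r+c+1).choose r)^2) : ℕ) : ℚ) := by
    push_cast
    rw [Nat.cast_choose ℚ (by omega : 2*r+1 ≤ 2*(r+c)+2), Nat.cast_choose ℚ (by omega : r ≤ 2*r),
      Nat.cast_choose ℚ (by omega : c ≤ 2*c), Nat.cast_choose ℚ (by omega : r+c+1 ≤ 2*(r+c)+2),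
      Nat.cast_choose ℚ (by omega : r ≤ r+c+1)]
    rw [show 2*(r+c)+2 - (2*r+1) = 2*c+1 by omega, show 2*r - r = r by omega,
      show 2*c - c = c by omega, show 2*(r+c)+2 - (r+c+1) = r+c+1 by omega,
      show r+c+1 - r = c+1 by omega]
    rw [Nat.factorial_succ (2*r), Nat.factorial_succ (2*c), Nat.factorial_succ (r+c),
      Nat.factorial_succ c]
    push_cast
    have h1 : ((r+c).factorial : ℚ) ≠ 0 := factq _
    have h2 : ((2*r).factorial : ℚ) ≠ 0 := factq _
    have h3 : ((2*c).factorial : ℚ) ≠ 0 := factq _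
    have h4 : (r.factorial : ℚ) ≠ 0 := factq _
    have h5 : (c.factorial : ℚ) ≠ 0 := factq _
    have h6 : ((2*r:ℚ)+1) ≠ 0 := by positivity
    have h7 : ((2*c:ℚ)+1) ≠ 0 := by positivity
    have h8 : ((r:ℚ)+c+1) ≠ 0 := by positivity
    have h9 : ((c:ℚ)+1) ≠ 0 := by positivity
    field_simp
  exact_mod_cast this



/-- central weighted sum -/
def A (m : ℕ) : ℤ := ∑ i ∈ range (m + 1), (m.choose i : ℤ) * |(m : ℤ) - 2 * i|

lemma tel (m h : ℕ) :
    ∑ i ∈ range (h + 1), (m.choose i : ℤ) * ((m : ℤ) - 2 * i)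
      = (m : ℤ) * ((m - 1).choose h : ℤ) := by
  induction h with
  | zero => simp
  | succ h ih =>
      rw [Finset.sum_range_succ, ih]
      rcases Nat.eq_zero_or_pos m with hm | hm
      · subst hm; simp [Nat.choose_eq_zero_of_lt]
      · obtain ⟨m', rfl⟩ : ∃ m', m = m' + 1 := ⟨m - 1, by omega⟩
        simp only [Nat.add_sub_cancel]
        by_cases hle : h + 1 ≤ m' + 1
        · have e1 : (m' + 1) * m'.choose h = (m'+1).choose (h+1) * (h+1) :=
            Nat.add_one_mul_choose_eq m' h
          have e2 : m'.choose (h+1) * (m' + 1) = (m'+1).choose (h+1) * (m' - h) := by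
            have := Nat.choose_mul_succ_eq m' (h+1)
            rwa [show m' + 1 - (h+1) = m' - h by omega] at this
          have e1' : ((m':ℤ) + 1) * (m'.choose h : ℤ) = ((m'+1).choose (h+1) : ℤ) * ((h:ℤ)+1) := by
            exact_mod_cast e1
          have e2' : ((m'.choose (h+1) : ℤ)) * ((m':ℤ) + 1)
              = ((m'+1).choose (h+1) : ℤ) * ((m':ℤ) - h) := by
            have := congrArg (Nat.cast : ℕ → ℤ) e2
            push_cast [Nat.cast_sub (by omega : h ≤ m')] at this
            exact this
          push_cast
          linarith [e1', e2']
        · have hz1 : (m'+1).choose (h+1) = 0 := Nat.choose_eq_zero_of_lt (by omega)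
          have hz2 : m'.choose (h+1) = 0 := Nat.choose_eq_zero_of_lt (by omega)
          have hz3 : m'.choose h = 0 := Nat.choose_eq_zero_of_lt (by omega)
          rw [hz1, hz2, hz3]
          push_cast
          ring

lemma A_zero : A 0 = 0 := by simp [A]

lemma A_even (r : ℕ) : A (2 * r) = 2 * r * ((2*r).choose r : ℤ) := by
  rcases Nat.eq_zero_or_pos r with hr | hr
  · subst hr; simpa using A_zero
  · have hsplit :
        (∑ i ∈ Ico 0 r, ((2*r).choose i : ℤ) * |(2*r : ℤ) - 2*i|)
        + ∑ i ∈ Ico r (2*r+1), ((2*r).choose i : ℤ) * |(2*r : ℤ) - 2*i|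
        = A (2*r) := by
      rw [A, Finset.range_eq_Ico]
      have := Finset.sum_Ico_consecutive
        (fun i => ((2*r).choose i : ℤ) * |(2*r : ℤ) - 2*i|) (by omega : 0 ≤ r)
        (by omega : r ≤ 2*r+1)
      convert this using 2 <;> push_cast <;> ring_nf
    have h1 : ∑ i ∈ Ico 0 r, ((2*r).choose i : ℤ) * |(2*r : ℤ) - 2*i|
        = ((2*r : ℕ) : ℤ) * ((2*r-1).choose (r-1) : ℤ) := by
      rw [← tel (2*r) (r-1), show r - 1 + 1 = r by omega, ← Finset.range_eq_Ico]
      apply Finset.sum_congr rfl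
      intro i hi
      simp only [Finset.mem_range] at hi
      rw [abs_of_nonneg (by push_cast; omega)]
      push_cast
      ring
    have h2 : ∑ i ∈ Ico r (2*r+1), ((2*r).choose i : ℤ) * |(2*r : ℤ) - 2*i|
        = ((2*r : ℕ) : ℤ) * ((2*r-1).choose r : ℤ) := by
      rw [← tel (2*r) r, Finset.range_eq_Ico]
      refine Finset.sum_nbij' (fun i => 2*r - i) (fun j => 2*r - j) ?_ ?_ ?_ ?_ ?_
      · intro a ha; simp only [Finset.mem_Ico] at *; omega
      · intro a ha; simp only [Finset.mem_Ico] at *; omega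
      · intro a ha; simp only [Finset.mem_Ico] at ha; omega
      · intro a ha; simp only [Finset.mem_Ico] at ha; omega
      · intro a ha
        simp only [Finset.mem_Ico] at ha
        have hsym : (2*r).choose (2*r - a) = (2*r).choose a := Nat.choose_symm (by omega)
        rw [hsym]
        have hc : ((2*r - a : ℕ) : ℤ) = 2*(r:ℤ) - a := by
          push_cast [Nat.cast_sub (by omega : a ≤ 2*r)]; ring
        rw [hc, abs_of_nonpos (by push_cast; omega)]
        push_cast
        ring
    have hp : (2*r-1).choose (r-1) + (2*r-1).choose r = (2*r).choose r := by
      obtain ⟨r', rfl⟩ : ∃ r', r = r' + 1 := ⟨r - 1, by omega⟩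
      have h2r : 2 * (r'+1) = (2*r'+1) + 1 := by ring
      rw [h2r, Nat.choose_succ_succ (2*r'+1) r']
      congr 2 <;> omega
    have hp' : ((2*r-1).choose (r-1) : ℤ) + ((2*r-1).choose r : ℤ) = ((2*r).choose r : ℤ) := by
      exact_mod_cast hp
    rw [← hsplit, h1, h2]
    push_cast at hp' ⊢
    nlinarith [hp']

lemma A_odd (r : ℕ) : A (2 * r + 1) = 2 * (2*r+1) * ((2*r).choose r : ℤ) := by
  have htel := tel (2*r+1) r
  rw [show 2*r+1-1 = 2*r by omega] at htel
  have hsplit :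
      (∑ i ∈ Ico 0 (r+1), ((2*r+1).choose i : ℤ) * |(2*r+1 : ℤ) - 2*i|)
      + ∑ i ∈ Ico (r+1) (2*r+2), ((2*r+1).choose i : ℤ) * |(2*r+1 : ℤ) - 2*i|
      = A (2*r+1) := by
    rw [A, Finset.range_eq_Ico]
    have := Finset.sum_Ico_consecutive
      (fun i => ((2*r+1).choose i : ℤ) * |(2*r+1 : ℤ) - 2*i|) (by omega : 0 ≤ r+1)
      (by omega : r+1 ≤ 2*r+1+1)
    convert this using 2 <;> push_cast <;> ring_nf
  have h1 : ∑ i ∈ Ico 0 (r+1), ((2*r+1).choose i : ℤ) * |(2*r+1 : ℤ) - 2*i|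
      = ((2*r+1 : ℕ) : ℤ) * ((2*r).choose r : ℤ) := by
    rw [← htel, ← Finset.range_eq_Ico]
    apply Finset.sum_congr rfl
    intro i hi
    simp only [Finset.mem_range] at hi
    rw [abs_of_nonneg (by push_cast; omega)]
    push_cast
    ring
  have h2 : ∑ i ∈ Ico (r+1) (2*r+2), ((2*r+1).choose i : ℤ) * |(2*r+1 : ℤ) - 2*i|
      = ((2*r+1 : ℕ) : ℤ) * ((2*r).choose r : ℤ) := by
    rw [← htel, Finset.range_eq_Ico]
    refine Finset.sum_nbij' (fun i => 2*r+1 - i) (fun j => 2*r+1 - j) ?_ ?_ ?_ ?_ ?_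
    · intro a ha; simp only [Finset.mem_Ico] at *; omega
    · intro a ha; simp only [Finset.mem_Ico] at *; omega
    · intro a ha; simp only [Finset.mem_Ico] at ha; omega
    · intro a ha; simp only [Finset.mem_Ico] at ha; omega
    · intro a ha
      simp only [Finset.mem_Ico] at ha
      have hsym : (2*r+1).choose (2*r+1 - a) = (2*r+1).choose a := Nat.choose_symm (by omega)
      rw [hsym]
      have hc : ((2*r+1 - a : ℕ) : ℤ) = 2*(r:ℤ)+1 - a := by
        push_cast [Nat.cast_sub (by omega : a ≤ 2*r+1)]; ring
      rw [hc, abs_of_nonpos (by push_cast; omega)]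
      push_cast
      ring
  rw [← hsplit, h1, h2]
  push_cast
  ring



section
variable (A : ℕ → ℤ)

-- V1
lemma choose_sq_sum (n : ℕ) :
    ∑ r ∈ range (n+1), ((n.choose r : ℤ))^2 = ((2*n).choose n : ℤ) := by
  have h : (2*n).choose n = ∑ r ∈ range (n+1), (n.choose r)^2 := by
    rw [show 2*n = n + n by ring, Nat.add_choose_eq,
      Finset.Nat.sum_antidiagonal_eq_sum_range_succ_mk]
    apply Finset.sum_congr rfl
    intro k hk
    simp only [Finset.mem_range] at hk
    rw [Nat.choose_symm (by omega : k ≤ n)]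
    ring
  rw [h]
  push_cast
  ring

-- V2 : reflection
lemma reflect_sum (n : ℕ) (f : ℕ → ℤ) :
    ∑ r ∈ range (n+1), f (n - r) = ∑ r ∈ range (n+1), f r := by
  have := Finset.sum_range_reflect f (n+1)
  simpa using this

lemma weighted_choose_sq (n : ℕ) :
    2 * (∑ r ∈ range (n+1), ((n:ℤ) - r) * ((n.choose r : ℤ))^2)
      = n * ((2*n).choose n : ℤ) := by
  have hrefl : ∑ r ∈ range (n+1), ((n:ℤ) - r) * ((n.choose r : ℤ))^2
      = ∑ r ∈ range (n+1), (r:ℤ) * ((n.choose r : ℤ))^2 := by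
    have := reflect_sum n (fun r => (r:ℤ) * ((n.choose r : ℤ))^2)
    rw [← this]
    apply Finset.sum_congr rfl
    intro r hr
    simp only [Finset.mem_range] at hr
    rw [Nat.choose_symm (by omega : r ≤ n), Nat.cast_sub (by omega : r ≤ n)]
  have hsum : (∑ r ∈ range (n+1), ((n:ℤ) - r) * ((n.choose r : ℤ))^2)
      + ∑ r ∈ range (n+1), (r:ℤ) * ((n.choose r : ℤ))^2
      = n * ((2*n).choose n : ℤ) := by
    rw [← Finset.sum_add_distrib, ← choose_sq_sum n, Finset.mul_sum]
    apply Finset.sum_congr rfl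
    intro r hr
    ring
  linarith [hrefl, hsum]

end


lemma final_sum (n : ℕ) :
    ∑ m ∈ range (2*n+1), ((2*n).choose m : ℤ) * (A m * A (2*n - m))
      = 2 * n^2 * ((2*n).choose n : ℤ)^2 := by
  classical
  have hsplit := Finset.sum_filter_add_sum_filter_not (range (2*n+1)) (fun m => Even m)
      (fun m => ((2*n).choose m : ℤ) * (A m * A (2*n - m)))
  have heven : ∑ r ∈ range (n+1),
        4 * (r:ℤ) * ((n:ℤ) - r) * (((2*n).choose n : ℤ) * ((n.choose r : ℤ))^2)
      = ∑ m ∈ (range (2*n+1)).filter (fun m => Even m),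
        ((2*n).choose m : ℤ) * (A m * A (2*n - m)) := by
    refine Finset.sum_nbij' (fun r => 2*r) (fun m => m / 2) ?_ ?_ ?_ ?_ ?_
    · intro a ha; simp only [Finset.mem_filter, Finset.mem_range, Nat.even_iff] at *; omega
    · intro a ha; simp only [Finset.mem_filter, Finset.mem_range, Nat.even_iff] at *; omega
    · intro a ha; omega
    · intro a ha; simp only [Finset.mem_filter, Finset.mem_range, Nat.even_iff] at ha
      omega
    · intro r hr
      simp only [Finset.mem_range] at hr
      obtain ⟨c, rfl⟩ : ∃ c, n = r + c := ⟨n - r, by omega⟩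
      rw [show 2*(r+c) - 2*r = 2*c by omega, A_even r, A_even c]
      have hM := M1 r c
      have hMc : (((2*(r+c)).choose (2*r) : ℤ) * (((2*r).choose r : ℤ) * ((2*c).choose c : ℤ)))
          = ((2*(r+c)).choose (r+c) : ℤ) * (((r+c).choose r : ℤ))^2 := by exact_mod_cast hM
      push_cast
      linear_combination (-4*(r:ℤ)*(c:ℤ)) * hMc
  have hodd : ∑ r ∈ range n,
        4 * ((n:ℤ) - r)^2 * (((2*n).choose n : ℤ) * ((n.choose r : ℤ))^2)
      = ∑ m ∈ (range (2*n+1)).filter (fun m => ¬ Even m),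
        ((2*n).choose m : ℤ) * (A m * A (2*n - m)) := by
    refine Finset.sum_nbij' (fun r => 2*r+1) (fun m => m / 2) ?_ ?_ ?_ ?_ ?_
    · intro a ha; simp only [Finset.mem_filter, Finset.mem_range, Nat.even_iff] at *; omega
    · intro a ha; simp only [Finset.mem_filter, Finset.mem_range, Nat.even_iff] at *; omega
    · intro a ha; omega
    · intro a ha; simp only [Finset.mem_filter, Finset.mem_range, Nat.even_iff] at ha
      omega
    · intro r hr
      simp only [Finset.mem_range] at hr
      obtain ⟨c, rfl⟩ : ∃ c, n = r + c + 1 := ⟨n - r - 1, by omega⟩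
      rw [show 2*(r+c+1) - (2*r+1) = 2*c+1 by omega, A_odd r, A_odd c]
      have hM := M2 r c
      have hMc : ((2*r:ℤ)+1) * ((2*c:ℤ)+1) * (((2*(r+c)+2).choose (2*r+1) : ℤ)
            * (((2*r).choose r : ℤ) * ((2*c).choose c : ℤ)))
          = ((c:ℤ)+1)^2 * (((2*(r+c)+2).choose (r+c+1) : ℤ) * (((r+c+1).choose r : ℤ))^2) := by
        exact_mod_cast hM
      have he1 : 2*(r+c+1) = 2*(r+c)+2 := by ring
      rw [he1]
      push_cast
      linear_combination (-4:ℤ) * hMc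
  have hodd' : ∑ r ∈ range (n+1),
        4 * ((n:ℤ) - r)^2 * (((2*n).choose n : ℤ) * ((n.choose r : ℤ))^2)
      = ∑ r ∈ range n,
        4 * ((n:ℤ) - r)^2 * (((2*n).choose n : ℤ) * ((n.choose r : ℤ))^2) := by
    rw [Finset.sum_range_succ]
    simp
  have hcombine : ∑ r ∈ range (n+1),
        4 * (r:ℤ) * ((n:ℤ) - r) * (((2*n).choose n : ℤ) * ((n.choose r : ℤ))^2)
      + ∑ r ∈ range (n+1),
        4 * ((n:ℤ) - r)^2 * (((2*n).choose n : ℤ) * ((n.choose r : ℤ))^2)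
      = 4 * (n:ℤ) * ((2*n).choose n : ℤ)
          * ∑ r ∈ range (n+1), ((n:ℤ) - r) * ((n.choose r : ℤ))^2 := by
    rw [← Finset.sum_add_distrib, Finset.mul_sum]
    apply Finset.sum_congr rfl
    intro r hr
    ring
  have hW := weighted_choose_sq n
  calc ∑ m ∈ range (2*n+1), ((2*n).choose m : ℤ) * (A m * A (2*n - m))
      = ∑ m ∈ (range (2*n+1)).filter (fun m => Even m),
          ((2*n).choose m : ℤ) * (A m * A (2*n - m))
        + ∑ m ∈ (range (2*n+1)).filter (fun m => ¬ Even m),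
          ((2*n).choose m : ℤ) * (A m * A (2*n - m)) := hsplit.symm
    _ = ∑ r ∈ range (n+1),
          4 * (r:ℤ) * ((n:ℤ) - r) * (((2*n).choose n : ℤ) * ((n.choose r : ℤ))^2)
        + ∑ r ∈ range (n+1),
          4 * ((n:ℤ) - r)^2 * (((2*n).choose n : ℤ) * ((n.choose r : ℤ))^2) := by
        rw [← heven, ← hodd, ← hodd']
    _ = 4 * (n:ℤ) * ((2*n).choose n : ℤ)
          * ∑ r ∈ range (n+1), ((n:ℤ) - r) * ((n.choose r : ℤ))^2 := hcombine
    _ = 2 * n^2 * ((2*n).choose n : ℤ)^2 := by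
        linear_combination (2*(n:ℤ)*(((2*n).choose n : ℤ))) * hW

def S1 (n : ℕ) : ℤ :=
  ∑ x ∈ range (2*n+1) ×ˢ range (2*n+1) ×ˢ range (2*n+1),
    (((2*n).choose x.1 * x.1.choose x.2.1 * (2*n - x.1).choose x.2.2 : ℕ) : ℤ)
      * (|(x.1:ℤ) - ((x.2.1:ℤ) + (x.2.2:ℤ))| * |(x.1:ℤ) + ((x.2.1:ℤ) + (x.2.2:ℤ)) - 2*n|)

lemma choose_ne_zero_le {a b : ℕ} (h : a.choose b ≠ 0) : b ≤ a := by
  by_contra hlt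
  exact h (Nat.choose_eq_zero_of_lt (by omega))

lemma LHS_eq_S1 (n : ℕ) :
    ∑ i ∈ range (2*n+1), ∑ j ∈ range (2*n+1),
      ((2*n).choose i : ℤ) * ((2*n).choose j : ℤ) * (|(i:ℤ) - j| * |(i:ℤ) + j - 2*n|)
    = S1 n := by
  have hVan : ∀ i j : ℕ, i ≤ 2*n →
      ((2*n).choose j : ℤ) = ∑ s ∈ range (j+1),
        ((i.choose s * (2*n - i).choose (j - s) : ℕ) : ℤ) := by
    intro i j hi
    have h := Nat.add_choose_eq i (2*n - i) j
    rw [show i + (2*n - i) = 2*n by omega] at h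
    rw [h, Finset.Nat.sum_antidiagonal_eq_sum_range_succ_mk]
    push_cast
    rfl
  have step1 : ∑ i ∈ range (2*n+1), ∑ j ∈ range (2*n+1),
      ((2*n).choose i : ℤ) * ((2*n).choose j : ℤ) * (|(i:ℤ) - j| * |(i:ℤ) + j - 2*n|)
    = ∑ i ∈ range (2*n+1), ∑ j ∈ range (2*n+1), ∑ s ∈ range (j+1),
      (((2*n).choose i * (i.choose s * (2*n - i).choose (j - s)) : ℕ) : ℤ)
        * (|(i:ℤ) - j| * |(i:ℤ) + j - 2*n|) := by
    refine Finset.sum_congr rfl (fun i hi => Finset.sum_congr rfl (fun j hj => ?_))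
    simp only [Finset.mem_range] at hi hj
    rw [hVan i j (by omega), Finset.mul_sum, Finset.sum_mul]
    apply Finset.sum_congr rfl
    intro s hs
    push_cast
    ring
  rw [step1]
  have step2 : ∑ i ∈ range (2*n+1), ∑ j ∈ range (2*n+1), ∑ s ∈ range (j+1),
      (((2*n).choose i * (i.choose s * (2*n - i).choose (j - s)) : ℕ) : ℤ)
        * (|(i:ℤ) - j| * |(i:ℤ) + j - 2*n|)
    = ∑ x ∈ (range (2*n+1) ×ˢ range (2*n+1)).sigma (fun p => range (p.2+1)),
      (((2*n).choose x.1.1 * (x.1.1.choose x.2 * (2*n - x.1.1).choose (x.1.2 - x.2)) : ℕ) : ℤ)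
        * (|(x.1.1:ℤ) - x.1.2| * |(x.1.1:ℤ) + x.1.2 - 2*n|) := by
    rw [Finset.sum_sigma]
    rw [Finset.sum_product]
  rw [step2]
  unfold S1
  refine Finset.sum_bij_ne_zero (fun a _ _ => (a.1.1, a.2, a.1.2 - a.2)) ?_ ?_ ?_ ?_
  · rintro ⟨⟨i, j⟩, s⟩ h₁ h₂
    simp only [Finset.mem_sigma, Finset.mem_product, Finset.mem_range] at h₁ ⊢
    omega
  · rintro ⟨⟨i₁, j₁⟩, s₁⟩ h₁₁ h₁₂ ⟨⟨i₂, j₂⟩, s₂⟩ h₂₁ h₂₂ heq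
    simp only [Finset.mem_sigma, Finset.mem_product, Finset.mem_range] at h₁₁ h₂₁
    simp only [Prod.mk.injEq] at heq
    have : i₁ = i₂ ∧ j₁ = j₂ ∧ s₁ = s₂ := by omega
    simp [this.1, this.2.1, this.2.2]
  · rintro ⟨i, s, q⟩ hb hgb
    simp only [Finset.mem_product, Finset.mem_range] at hb
    have hcoef : ((2*n).choose i * i.choose s * (2*n - i).choose q : ℕ) ≠ 0 := by
      intro h0
      apply hgb
      rw [h0]
      push_cast
      ring
    have hsi : s ≤ i := choose_ne_zero_le (by
      intro h0; exact hcoef (by simp [h0]))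
    have hq : q ≤ 2*n - i := choose_ne_zero_le (by
      intro h0; exact hcoef (by simp [h0]))
    refine ⟨⟨(i, s + q), s⟩, ?_, ?_, ?_⟩
    · simp only [Finset.mem_sigma, Finset.mem_product, Finset.mem_range]
      omega
    · intro h0
      apply hgb
      rw [show s + q - s = q by omega] at h0
      have hc : ((s:ℤ) + q) = ((s + q : ℕ) : ℤ) := by push_cast; ring
      rw [hc]
      have h0' : (((2*n).choose i * (i.choose s * (2*n - i).choose q) : ℕ) : ℤ)
          * (|(i:ℤ) - (s+q:ℕ)| * |(i:ℤ) + (s+q:ℕ) - 2*n|) = 0 := h0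
      calc (((2*n).choose i * i.choose s * (2*n - i).choose q : ℕ) : ℤ)
            * (|(i:ℤ) - (s+q:ℕ)| * |(i:ℤ) + (s+q:ℕ) - 2*n|)
          = (((2*n).choose i * (i.choose s * (2*n - i).choose q) : ℕ) : ℤ)
            * (|(i:ℤ) - (s+q:ℕ)| * |(i:ℤ) + (s+q:ℕ) - 2*n|) := by push_cast; ring
        _ = 0 := h0
    · simp only []
      rw [show s + q - s = q by omega]
  · rintro ⟨⟨i, j⟩, s⟩ h₁ h₂
    simp only [Finset.mem_sigma, Finset.mem_product, Finset.mem_range] at h₁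
    have hsj : s ≤ j := by omega
    have hc : ((j - s : ℕ) : ℤ) = (j:ℤ) - s := by omega
    simp only []
    rw [hc]
    have h1 : (s:ℤ) + ((j:ℤ) - s) = (j:ℤ) := by ring
    rw [h1]
    push_cast
    ring



lemma RHS_eq_S1 (n : ℕ) :
    ∑ m ∈ range (2*n+1), ((2*n).choose m : ℤ) * (A m * A (2*n - m)) = S1 n := by
  have step1 : ∑ m ∈ range (2*n+1), ((2*n).choose m : ℤ) * (A m * A (2*n - m))
      = ∑ m ∈ range (2*n+1), ∑ sp ∈ range (m+1) ×ˢ range ((2*n - m)+1),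
        (((2*n).choose m * (m.choose sp.1 * (2*n - m).choose sp.2) : ℕ) : ℤ)
          * (|(m:ℤ) - 2*sp.1| * |((2*n - m : ℕ):ℤ) - 2*sp.2|) := by
    refine Finset.sum_congr rfl (fun m hm => ?_)
    rw [A, A, Finset.sum_mul_sum, Finset.mul_sum, Finset.sum_product]
    refine Finset.sum_congr rfl (fun s hs => ?_)
    rw [Finset.mul_sum]
    refine Finset.sum_congr rfl (fun p hp => ?_)
    push_cast
    ring
  rw [step1]
  rw [show (∑ m ∈ range (2*n+1), ∑ sp ∈ range (m+1) ×ˢ range ((2*n - m)+1),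
        (((2*n).choose m * (m.choose sp.1 * (2*n - m).choose sp.2) : ℕ) : ℤ)
          * (|(m:ℤ) - 2*sp.1| * |((2*n - m : ℕ):ℤ) - 2*sp.2|))
      = ∑ x ∈ (range (2*n+1)).sigma (fun m => range (m+1) ×ˢ range ((2*n - m)+1)),
        (((2*n).choose x.1 * (x.1.choose x.2.1 * (2*n - x.1).choose x.2.2) : ℕ) : ℤ)
          * (|(x.1:ℤ) - 2*x.2.1| * |((2*n - x.1 : ℕ):ℤ) - 2*x.2.2|) from by
    rw [Finset.sum_sigma]]
  unfold S1
  -- value correspondence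
  have hval : ∀ m s p : ℕ, s ≤ m → m ≤ 2*n → p ≤ 2*n - m →
      (((2*n).choose m * (m.choose s * (2*n - m).choose p) : ℕ) : ℤ)
        * (|(m:ℤ) - 2*s| * |((2*n - m : ℕ):ℤ) - 2*p|)
      = (((2*n).choose (s+p) * (s+p).choose s * (2*n - (s+p)).choose (2*n - m - p) : ℕ) : ℤ)
        * (|((s+p:ℕ):ℤ) - ((s:ℤ) + ((2*n - m - p : ℕ):ℤ))|
            * |((s+p:ℕ):ℤ) + ((s:ℤ) + ((2*n - m - p : ℕ):ℤ)) - 2*n|) := by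
    intro m s p hsm hm hp
    set q := 2*n - m - p with hq
    set r := m - s with hr
    have hsum : s + p + q + r = 2*n := by omega
    have hcoef := multi_move (2*n) s p q r hsum
    rw [show s + r = m by omega] at hcoef
    have hcoef' : (((2*n).choose (s+p) * (s+p).choose s * (2*n - (s+p)).choose q : ℕ) : ℤ)
        = (((2*n).choose m * (m.choose s * (2*n - m).choose p) : ℕ) : ℤ) := by
      rw [hcoef]; push_cast; ring
    rw [hcoef']
    have w1 : ((s+p:ℕ):ℤ) - ((s:ℤ) + ((q : ℕ):ℤ)) = -(((2*n - m : ℕ):ℤ) - 2*(p:ℤ)) := by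
      push_cast [Nat.cast_sub (by omega : m ≤ 2*n), Nat.cast_sub (by omega : p ≤ 2*n - m)]
      omega
    have w2 : ((s+p:ℕ):ℤ) + ((s:ℤ) + ((q : ℕ):ℤ)) - 2*(n:ℤ) = -((m:ℤ) - 2*(s:ℤ)) := by
      push_cast [Nat.cast_sub (by omega : m ≤ 2*n), Nat.cast_sub (by omega : p ≤ 2*n - m)]
      omega
    rw [w1, w2, abs_neg, abs_neg]
    ring
  refine Finset.sum_bij_ne_zero (fun a _ _ => (a.2.1 + a.2.2, a.2.1, 2*n - a.1 - a.2.2)) ?_ ?_ ?_ ?_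
  · rintro ⟨m, s, p⟩ h₁ h₂
    simp only [Finset.mem_sigma, Finset.mem_product, Finset.mem_range] at h₁ ⊢
    omega
  · rintro ⟨m₁, s₁, p₁⟩ h₁₁ h₁₂ ⟨m₂, s₂, p₂⟩ h₂₁ h₂₂ heq
    simp only [Finset.mem_sigma, Finset.mem_product, Finset.mem_range] at h₁₁ h₂₁
    simp only [Prod.mk.injEq] at heq
    have : m₁ = m₂ ∧ s₁ = s₂ ∧ p₁ = p₂ := by omega
    simp [this.1, this.2.1, this.2.2]
  · rintro ⟨i, s, q⟩ hb hgb
    simp only [Finset.mem_product, Finset.mem_range] at hb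
    have hcoef : ((2*n).choose i * i.choose s * (2*n - i).choose q : ℕ) ≠ 0 := by
      intro h0
      apply hgb
      rw [h0]
      push_cast
      ring
    have hsi : s ≤ i := choose_ne_zero_le (by
      intro h0; exact hcoef (by simp [h0]))
    have hq : q ≤ 2*n - i := choose_ne_zero_le (by
      intro h0; exact hcoef (by simp [h0]))
    have hi : i ≤ 2*n := by omega
    set p := i - s with hp
    set m := 2*n - p - q with hm
    refine ⟨⟨m, s, p⟩, ?_, ?_, ?_⟩
    · simp only [Finset.mem_sigma, Finset.mem_product, Finset.mem_range]
      omega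
    · have hfa := hval m s p (by omega) (by omega) (by omega)
      rw [show s + p = i by omega, show 2*n - m - p = q by omega] at hfa
      intro h0
      exact hgb (by rw [← hfa]; exact h0)
    · simp only []
      rw [show s + p = i by omega, show 2*n - m - p = q by omega]
  · rintro ⟨m, s, p⟩ h₁ h₂
    simp only [Finset.mem_sigma, Finset.mem_product, Finset.mem_range] at h₁
    exact hval m s p (by omega) (by omega) (by omega)

lemma ichoose_ne {N : ℕ} {k : ℤ} (h : ichoose N k ≠ 0) : 0 ≤ k ∧ k ≤ N := by
  unfold ichoose at h
  split_ifs at h with h0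
  · refine ⟨h0, ?_⟩
    by_contra hgt
    push_neg at hgt
    have hlt : N < k.toNat := by omega
    simp [Nat.choose_eq_zero_of_lt hlt] at h
  · exact absurd rfl h

lemma reduce (n : ℕ) :
    ∑ᶠ k : ℤ, ∑ᶠ l : ℤ,
        ichoose (2 * n) (n + k) * ichoose (2 * n) (n + l) * |k ^ 2 - l ^ 2|
    = ∑ i ∈ Finset.range (2*n+1), ∑ j ∈ Finset.range (2*n+1),
        ((2*n).choose i : ℤ) * ((2*n).choose j : ℤ)
          * (|(i:ℤ) - j| * |(i:ℤ) + j - 2*n|) := by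
  have hinner : ∀ k : ℤ,
      (∑ᶠ l : ℤ, ichoose (2 * n) (n + k) * ichoose (2 * n) (n + l) * |k ^ 2 - l ^ 2|)
      = ∑ l ∈ Finset.Icc (-(n:ℤ)) n,
          ichoose (2 * n) (n + k) * ichoose (2 * n) (n + l) * |k ^ 2 - l ^ 2| := by
    intro k
    apply finsum_eq_sum_of_support_subset
    intro l hl
    simp only [Function.mem_support] at hl
    have h2 : ichoose (2 * n) (n + l) ≠ 0 := by
      intro h0
      exact hl (by rw [h0]; ring)
    have := ichoose_ne h2
    simp only [Finset.coe_Icc, Set.mem_Icc]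
    push_cast at this ⊢
    omega
  rw [finsum_congr hinner]
  rw [finsum_eq_sum_of_support_subset _ (s := Finset.Icc (-(n:ℤ)) n) ?hsupp]
  case hsupp =>
    intro k hk
    simp only [Function.mem_support] at hk
    have h1 : ichoose (2 * n) (n + k) ≠ 0 := by
      intro h0
      apply hk
      apply Finset.sum_eq_zero
      intro l hl
      rw [h0]; ring
    have := ichoose_ne h1
    simp only [Finset.coe_Icc, Set.mem_Icc]
    push_cast at this ⊢
    omega
  -- now reindex both Icc sums to range
  have hic : ∀ i : ℕ, i ≤ 2*n → ichoose (2*n) ((n:ℤ) + ((i:ℤ) - n)) = ((2*n).choose i : ℤ) := by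
    intro i hi
    rw [show (n:ℤ) + ((i:ℤ) - n) = (i:ℤ) by ring]
    unfold ichoose
    rw [if_pos (by positivity)]
    simp
  refine Finset.sum_nbij' (fun k => (k + n).toNat) (fun i => (i:ℤ) - n) ?_ ?_ ?_ ?_ ?_
  · intro k hk
    simp only [Finset.mem_Icc] at hk
    simp only [Finset.mem_range]
    omega
  · intro i hi
    simp only [Finset.mem_range] at hi
    simp only [Finset.mem_Icc]
    omega
  · intro k hk
    simp only [Finset.mem_Icc] at hk
    omega
  · intro i hi
    simp only [Finset.mem_range] at hi
    omega
  · intro k hk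
    simp only [Finset.mem_Icc] at hk
    have hkk : ((((k + n).toNat : ℕ)):ℤ) = k + n := by omega
    refine Finset.sum_nbij' (fun l => (l + n).toNat) (fun j => (j:ℤ) - n) ?_ ?_ ?_ ?_ ?_
    · intro l hl
      simp only [Finset.mem_Icc] at hl
      simp only [Finset.mem_range]
      omega
    · intro j hj
      simp only [Finset.mem_range] at hj
      simp only [Finset.mem_Icc]
      omega
    · intro l hl
      simp only [Finset.mem_Icc] at hl
      omega
    · intro j hj
      simp only [Finset.mem_range] at hj
      omega
    · intro l hl
      simp only [Finset.mem_Icc] at hl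
      have hll : ((((l + n).toNat : ℕ)):ℤ) = l + n := by omega
      have e1 : ichoose (2*n) (n + k) = (((2*n).choose (k+n).toNat : ℕ) : ℤ) := by
        unfold ichoose
        rw [show (n:ℤ) + k = k + n from by ring, if_pos (by omega)]
      have e2 : ichoose (2*n) (n + l) = (((2*n).choose (l+n).toNat : ℕ) : ℤ) := by
        unfold ichoose
        rw [show (n:ℤ) + l = l + n from by ring, if_pos (by omega)]
      rw [e1, e2]
      have habs : |k ^ 2 - l ^ 2|
          = |(((k+n).toNat : ℕ):ℤ) - (((l+n).toNat : ℕ):ℤ)|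
            * |(((k+n).toNat : ℕ):ℤ) + (((l+n).toNat : ℕ):ℤ) - 2*n| := by
        rw [hkk, hll]
        rw [show (k + n) - (l + n) = k - l by ring,
          show (k + n) + (l + n) - 2*(n:ℤ) = k + l by ring]
        rw [← abs_mul]
        congr 1
        ring
      rw [habs]
  done


end Stmt3Aux

theorem stmt3 (n : ℕ) :
    ∑ᶠ k : ℤ, ∑ᶠ l : ℤ,
        ichoose (2 * n) (n + k) * ichoose (2 * n) (n + l) * |k ^ 2 - l ^ 2|
      = 2 * n ^ 2 * ((2 * n).choose n : ℤ) ^ 2 := by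
  rw [Stmt3Aux.reduce n, Stmt3Aux.LHS_eq_S1 n, ← Stmt3Aux.RHS_eq_S1 n, Stmt3Aux.final_sum n]
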